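/- For a triangle functor F : A → B, if the induced functor F̃ : A/Ker(F) → B is faithful, then F satisfies condition (WSM). -/

import Mathlib

open CategoryTheory CategoryTheory.Limits CategoryTheory.Pretriangulated

universe v₁ v₂ u₁ u₂

namespace CategoryTheory.Triangulated

variable (C : Type*) [Category C] [HasZeroObject C] [HasShift C ℤ] [Preadditive C]
  [∀ n : ℤ, (shiftFunctor C n).Additive] [Pretriangulated C]

/-- The structure `Triangulated.Subcategory` as it was in Mathlib (December 2024),
removed since in favour of `ObjectProperty.IsTriangulated`. -/
structure Subcategory where
  P : C → Prop
  zero' : ∃ (Z : C) (_ : IsZero Z), P Z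
  shift (X : C) (n : ℤ) : P X → P (X⟦n⟧)
  ext₂' (T : Triangle C) (_ : T ∈ distTriang C) : P T.obj₁ → P T.obj₃ →
    ObjectProperty.isoClosure P T.obj₂

variable {C}

/-- The class of morphisms whose cone belongs to `S` (old `Subcategory.W`). -/
def Subcategory.W (S : Subcategory C) : MorphismProperty C :=
  fun X Y f => ∃ (Z : C) (g : Y ⟶ Z) (h : Z ⟶ X⟦(1 : ℤ)⟧)
    (_ : Triangle.mk f g h ∈ distTriang C), S.P Z

end CategoryTheory.Triangulated


variable {A : Type u₁} {B : Type u₂} [Category.{v₁} A] [Category.{v₂} B]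
  [Preadditive A] [Preadditive B] [HasZeroObject A] [HasZeroObject B]
  [HasShift A ℤ] [HasShift B ℤ]
  [∀ n : ℤ, (shiftFunctor A n).Additive] [∀ n : ℤ, (shiftFunctor B n).Additive]
  [Pretriangulated A] [Pretriangulated B] [IsTriangulated A] [IsTriangulated B]


/-- If the induced functor `F̃ : A/Ker F ⟶ B` on the Verdier quotient is faithful,
then the triangle functor `F` satisfies condition (WSM). -/
theorem stmt10 (F : A ⥤ B) [F.CommShift ℤ] [F.IsTriangulated]
    (S : Triangulated.Subcategory A) (hS : ∀ X : A, S.P X ↔ IsZero (F.obj X))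
    (Ft : S.W.Localization ⥤ B) (e : S.W.Q ⋙ Ft ≅ F) (hFt : Ft.Faithful) :
    ∀ (X Y : A) (u : X ⟶ Y), IsSplitMono (F.map u) →
      ∃ (X' : A) (u' : Y ⟶ X'), IsIso (F.map (u ≫ u')) := by
  intro X Y u hu
  -- relate `F.map` and `Ft.map ∘ Q.map`
  have key : ∀ {P Q : A} (g : P ⟶ Q),
      Ft.map (S.W.Q.map g) = e.hom.app P ≫ F.map g ≫ e.inv.app Q := by
    intro P Q g
    have h := e.hom.naturality g
    simp only [Functor.comp_map] at h
    rw [← Category.assoc, ← h, Category.assoc, Iso.hom_inv_id_app, Category.comp_id]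
  -- `Q.map u` is a mono in the Verdier quotient
  haveI : Mono (S.W.Q.map u) := by
    haveI := hFt
    apply Ft.mono_of_mono_map (f := S.W.Q.map u)
    rw [key u]
    haveI : Mono (F.map u) := inferInstance
    infer_instance
  haveI hP : ObjectProperty.IsTriangulated (S.P : ObjectProperty A) :=
    { exists_zero := by obtain ⟨Z, hZ, h⟩ := S.zero'; exact ⟨Z, hZ, h⟩
      isStableUnderShiftBy := fun n => ⟨fun X hX => S.shift X n hX⟩
      ext₂' := S.ext₂' }
  have hW : S.W = ObjectProperty.trW (S.P : ObjectProperty A) := rfl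
  haveI : S.W.IsCompatibleWithTriangulation := hW ▸ inferInstance
  haveI : S.W.HasLeftCalculusOfFractions := hW ▸ inferInstance
  -- hence a split mono (pretriangulated categories are split mono categories)
  haveI : IsSplitMono (S.W.Q.map u) := isSplitMono_of_mono _
  set r : S.W.Q.obj Y ⟶ S.W.Q.obj X := retraction (S.W.Q.map u) with hr
  have hru : S.W.Q.map u ≫ r = 𝟙 _ := IsSplitMono.id _
  -- write the retraction as a left fraction
  obtain ⟨φ, hφ⟩ := Localization.exists_leftFraction S.W.Q S.W r
  refine ⟨φ.Y', φ.f, ?_⟩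
  haveI := Localization.inverts S.W.Q S.W φ.s φ.hs
  have hQ : S.W.Q.map (u ≫ φ.f) = S.W.Q.map φ.s := by
    have h1 : r ≫ S.W.Q.map φ.s = S.W.Q.map φ.f := by
      rw [hφ]; exact φ.map_comp_map_s S.W.Q (Localization.inverts S.W.Q S.W)
    rw [S.W.Q.map_comp, ← h1, ← Category.assoc, hru, Category.id_comp]
  haveI : IsIso (S.W.Q.map (u ≫ φ.f)) := by rw [hQ]; infer_instance
  have hF : F.map (u ≫ φ.f) = e.inv.app X ≫ Ft.map (S.W.Q.map (u ≫ φ.f)) ≫ e.hom.app φ.Y' := by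
    simp only [F.map_comp, S.W.Q.map_comp, Ft.map_comp, key, Category.assoc,
      Iso.inv_hom_id_app_assoc, Iso.inv_hom_id_app, Category.comp_id]
  rw [hF]
  infer_instance
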